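/- arXiv:2504.18390 — 2 statements merged into one kernel-verified Lean document; each statement's English description precedes it below -/
import Mathlib

section
/- Let X = Option (ZMod 125), writing ∞ for none, with ZMod 125 acting on X by translation (t • some x = some (x + t), t • ∞ = ∞). Let ℬ be the family of all translates of the five base blocks B1 = {0,1,3,15,47,74}, B2 = {0,4,9,20,65,103}, B3 = {0,6,40,88,95,112}, B4 = {0,8,18,41,76,104} (as subsets of X via some), and B5 = {0,25,50,75,100} ∪ {∞}. Then every block of ℬ has exactly 6 elements and every pair of distinct points of X is contained in exactly one block of ℬ; that is, ℬ is a Steiner system S(2,6,126) (a unital of order 5) on X, invariant under the translation action with the single fixed point ∞. -/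
/-- Translation action of `ZMod 125` on `Option (ZMod 125)`:
`t • some x = some (x + t)`, `t • ∞ = ∞`. -/
def tr125 (t : ZMod 125) : Option (ZMod 125) → Option (ZMod 125) :=
  Option.map (fun a => a + t)

/-- The five base blocks of the difference family. -/
def baseBlocks0 : List (Finset (Option (ZMod 125))) :=
  [ {some 0, some 1, some 3, some 15, some 47, some 74},
    {some 0, some 4, some 9, some 20, some 65, some 103},
    {some 0, some 6, some 40, some 88, some 95, some 112},
    {some 0, some 8, some 18, some 41, some 76, some 104},
    {some 0, some 25, some 50, some 75, some 100, none} ]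

/-- The family of all translates of the base blocks. -/
def blocks0 : Set (Finset (Option (ZMod 125))) :=
  { B | ∃ t : ZMod 125, ∃ B0 ∈ baseBlocks0, B = B0.image (tr125 t) }

def Bblk : Fin 5 → Finset (Option (ZMod 125))
  | 0 => {some 0, some 1, some 3, some 15, some 47, some 74}
  | 1 => {some 0, some 4, some 9, some 20, some 65, some 103}
  | 2 => {some 0, some 6, some 40, some 88, some 95, some 112}
  | 3 => {some 0, some 8, some 18, some 41, some 76, some 104}
  | 4 => {some 0, some 25, some 50, some 75, some 100, none}

def pl : List (Fin 5 × ZMod 125 × ZMod 125) :=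
  [ (0, 0, 1),
    (0, 0, 3),
    (0, 0, 15),
    (0, 0, 47),
    (0, 0, 74),
    (0, 1, 0),
    (0, 1, 3),
    (0, 1, 15),
    (0, 1, 47),
    (0, 1, 74),
    (0, 3, 0),
    (0, 3, 1),
    (0, 3, 15),
    (0, 3, 47),
    (0, 3, 74),
    (0, 15, 0),
    (0, 15, 1),
    (0, 15, 3),
    (0, 15, 47),
    (0, 15, 74),
    (0, 47, 0),
    (0, 47, 1),
    (0, 47, 3),
    (0, 47, 15),
    (0, 47, 74),
    (0, 74, 0),
    (0, 74, 1),
    (0, 74, 3),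
    (0, 74, 15),
    (0, 74, 47),
    (1, 0, 4),
    (1, 0, 9),
    (1, 0, 20),
    (1, 0, 65),
    (1, 0, 103),
    (1, 4, 0),
    (1, 4, 9),
    (1, 4, 20),
    (1, 4, 65),
    (1, 4, 103),
    (1, 9, 0),
    (1, 9, 4),
    (1, 9, 20),
    (1, 9, 65),
    (1, 9, 103),
    (1, 20, 0),
    (1, 20, 4),
    (1, 20, 9),
    (1, 20, 65),
    (1, 20, 103),
    (1, 65, 0),
    (1, 65, 4),
    (1, 65, 9),
    (1, 65, 20),
    (1, 65, 103),
    (1, 103, 0),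
    (1, 103, 4),
    (1, 103, 9),
    (1, 103, 20),
    (1, 103, 65),
    (2, 0, 6),
    (2, 0, 40),
    (2, 0, 88),
    (2, 0, 95),
    (2, 0, 112),
    (2, 6, 0),
    (2, 6, 40),
    (2, 6, 88),
    (2, 6, 95),
    (2, 6, 112),
    (2, 40, 0),
    (2, 40, 6),
    (2, 40, 88),
    (2, 40, 95),
    (2, 40, 112),
    (2, 88, 0),
    (2, 88, 6),
    (2, 88, 40),
    (2, 88, 95),
    (2, 88, 112),
    (2, 95, 0),
    (2, 95, 6),
    (2, 95, 40),
    (2, 95, 88),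
    (2, 95, 112),
    (2, 112, 0),
    (2, 112, 6),
    (2, 112, 40),
    (2, 112, 88),
    (2, 112, 95),
    (3, 0, 8),
    (3, 0, 18),
    (3, 0, 41),
    (3, 0, 76),
    (3, 0, 104),
    (3, 8, 0),
    (3, 8, 18),
    (3, 8, 41),
    (3, 8, 76),
    (3, 8, 104),
    (3, 18, 0),
    (3, 18, 8),
    (3, 18, 41),
    (3, 18, 76),
    (3, 18, 104),
    (3, 41, 0),
    (3, 41, 8),
    (3, 41, 18),
    (3, 41, 76),
    (3, 41, 104),
    (3, 76, 0),
    (3, 76, 8),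
    (3, 76, 18),
    (3, 76, 41),
    (3, 76, 104),
    (3, 104, 0),
    (3, 104, 8),
    (3, 104, 18),
    (3, 104, 41),
    (3, 104, 76) ]

lemma mem_baseBlocks0 {B0 : Finset (Option (ZMod 125))} :
    B0 ∈ baseBlocks0 ↔ ∃ i : Fin 5, B0 = Bblk i := by
  constructor
  · intro h
    simp only [baseBlocks0, List.mem_cons, List.not_mem_nil, or_false] at h
    rcases h with h|h|h|h|h
    exacts [⟨0, h⟩, ⟨1, h⟩, ⟨2, h⟩, ⟨3, h⟩, ⟨4, h⟩]
  · rintro ⟨i, rfl⟩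
    fin_cases i <;> simp [baseBlocks0, Bblk]

lemma mem_blocks0 {B : Finset (Option (ZMod 125))} :
    B ∈ blocks0 ↔ ∃ t : ZMod 125, ∃ i : Fin 5, B = (Bblk i).image (tr125 t) := by
  constructor
  · rintro ⟨t, B0, hB0, rfl⟩
    rcases mem_baseBlocks0.mp hB0 with ⟨i, rfl⟩
    exact ⟨t, i, rfl⟩
  · rintro ⟨t, i, rfl⟩
    exact ⟨t, Bblk i, mem_baseBlocks0.mpr ⟨i, rfl⟩, rfl⟩

lemma tr125_inj (t : ZMod 125) : Function.Injective (tr125 t) :=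
  Option.map_injective (add_left_injective t)

lemma image_image (B : Finset (Option (ZMod 125))) (s t : ZMod 125) :
    (B.image (tr125 s)).image (tr125 t) = B.image (tr125 (s + t)) := by
  rw [Finset.image_image]
  congr 1
  funext a
  cases a <;> simp [tr125, Function.comp, add_assoc]

lemma tr_eq_some {t : ZMod 125} {e : Option (ZMod 125)} {a : ZMod 125}
    (h : tr125 t e = some a) : e = some (a - t) := by
  cases e with
  | none => simp [tr125] at h
  | some x =>
    simp only [tr125, Option.map_some] at h
    obtain rfl : x + t = a := Option.some.inj h
    simp

lemma tr_eq_none {t : ZMod 125} {e : Option (ZMod 125)}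
    (h : tr125 t e = none) : e = none := by
  cases e <;> simp [tr125] at h ⊢

-- key decidable facts
set_option maxRecDepth 20000 in
lemma K1 : ∀ d : ZMod 125, d ≠ 0 →
    ∃ i : Fin 5, ∃ e ∈ Bblk i, e ≠ none ∧ tr125 d e ∈ Bblk i := by decide

set_option maxRecDepth 4000 in
lemma Knodup : (pl.map fun p => p.2.2 - p.2.1).Nodup := by decide

def P25 (v : ZMod 125) : Prop := v = 25 ∨ v = 50 ∨ v = 75 ∨ v = 100
instance : DecidablePred P25 := fun v => by unfold P25; infer_instance

set_option maxRecDepth 4000 in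
lemma KdisjB : pl.all (fun p => decide (¬ P25 (p.2.2 - p.2.1))) = true := by decide

lemma Kdisj : ∀ p ∈ pl, ¬ P25 (p.2.2 - p.2.1) := by
  intro p hp
  exact of_decide_eq_true (List.all_eq_true.mp KdisjB p hp)

set_option maxRecDepth 4000 in
lemma KmemB : ∀ i : Fin 5, i ≠ 4 → ∀ e ∈ Bblk i, ∀ e' ∈ Bblk i,
    e ≠ none → e' ≠ none → e ≠ e' → pl.elem (i, e.getD 0, e'.getD 0) = true := by decide

lemma Kmem : ∀ i : Fin 5, i ≠ 4 → ∀ e ∈ Bblk i, ∀ e' ∈ Bblk i,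
    e ≠ none → e' ≠ none → e ≠ e' → (i, e.getD 0, e'.getD 0) ∈ pl := by
  intro i hi e he e' he' h1 h2 h3
  exact List.mem_of_elem_eq_true (KmemB i hi e he e' he' h1 h2 h3)

set_option maxRecDepth 4000 in
lemma K25 : ∀ e ∈ Bblk 4, ∀ e' ∈ Bblk 4, e ≠ none → e' ≠ none → e ≠ e' →
    P25 (e'.getD 0 - e.getD 0) := by decide

set_option maxRecDepth 4000 in
lemma Kinf : ∀ i : Fin 5, none ∈ Bblk i → i = 4 := by decide

set_option maxRecDepth 20000 in
lemma Kcoset : ∀ u : ZMod 125, some (-u) ∈ Bblk 4 →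
    (Bblk 4).image (tr125 u) = Bblk 4 := by decide

set_option maxRecDepth 4000 in
lemma Kcard : ∀ i : Fin 5, (Bblk i).card = 6 := by decide

/-- a translate of block 4 containing `some a` is the canonical one through `a`. -/
lemma blk4_canon {t a : ZMod 125} (h : some (a - t) ∈ Bblk 4) :
    (Bblk 4).image (tr125 t) = (Bblk 4).image (tr125 a) := by
  have h4 : (Bblk 4).image (tr125 (t - a)) = Bblk 4 := by
    apply Kcoset; rwa [neg_sub]
  calc (Bblk 4).image (tr125 t)
      = ((Bblk 4).image (tr125 (t - a))).image (tr125 a) := by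
        rw [image_image, sub_add_cancel]
    _ = (Bblk 4).image (tr125 a) := by rw [h4]

theorem unital_Z125_design1 :
    (∀ B ∈ blocks0, B.card = 6) ∧
    (∀ p q : Option (ZMod 125), p ≠ q →
      ∃! B, B ∈ blocks0 ∧ p ∈ B ∧ q ∈ B) ∧
    (∀ t : ZMod 125, ∀ B ∈ blocks0, B.image (tr125 t) ∈ blocks0) ∧
    (∀ t : ZMod 125, tr125 t none = none) ∧
    (∀ t : ZMod 125, t ≠ 0 → ∀ x : Option (ZMod 125), tr125 t x = x → x = none) := by
  have mem_some : ∀ (a t : ZMod 125) (C : Finset (Option (ZMod 125))),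
      some a ∈ C.image (tr125 t) ↔ some (a - t) ∈ C := by
    intro a t C
    constructor
    · rintro h
      rcases Finset.mem_image.mp h with ⟨e, he, hte⟩
      rwa [tr_eq_some hte] at he
    · intro h
      refine Finset.mem_image.mpr ⟨some (a - t), h, ?_⟩
      simp [tr125]
  refine ⟨?_, ?_, ?_, ?_, ?_⟩
  · intro B hB
    rcases mem_blocks0.mp hB with ⟨t, i, rfl⟩
    rw [Finset.card_image_of_injective _ (tr125_inj t), Kcard]
  · -- main pair-coverage part
    have main : ∀ a : ZMod 125, ∀ q : Option (ZMod 125), q ≠ some a →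
        ∃! B, B ∈ blocks0 ∧ some a ∈ B ∧ q ∈ B := by
      intro a q hq
      cases q with
      | none =>
        refine ⟨(Bblk 4).image (tr125 a), ⟨mem_blocks0.mpr ⟨a, 4, rfl⟩, ?_, ?_⟩, ?_⟩
        · rw [mem_some]; simp; decide
        · exact Finset.mem_image.mpr ⟨none, by decide, rfl⟩
        · rintro B ⟨hB, haB, hnB⟩
          rcases mem_blocks0.mp hB with ⟨t, i, rfl⟩
          rcases Finset.mem_image.mp hnB with ⟨e, he, hte⟩
          obtain rfl := tr_eq_none hte
          obtain rfl : i = 4 := Kinf i he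
          rw [mem_some] at haB
          exact blk4_canon haB
      | some b =>
        set d := b - a with hd
        have hd0 : d ≠ 0 := fun h => hq (by rw [sub_eq_zero.mp h])
        obtain ⟨i, e, he, hen, hde⟩ := K1 d hd0
        obtain ⟨x, rfl⟩ := Option.ne_none_iff_exists'.mp hen
        have hxd : some (x + d) ∈ Bblk i := by simpa [tr125] using hde
        set W := (Bblk i).image (tr125 (a - x)) with hW
        have hWblocks : W ∈ blocks0 := mem_blocks0.mpr ⟨a - x, i, rfl⟩
        have haW : some a ∈ W := by
          rw [hW, mem_some]
          have h : a - (a - x) = x := by ring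
          rwa [h]
        have hbW : some b ∈ W := by
          rw [hW, mem_some]
          have h : b - (a - x) = x + d := by rw [hd]; ring
          rwa [h]
        refine ⟨W, ⟨hWblocks, haW, hbW⟩, ?_⟩
        rintro B ⟨hB, haB, hbB⟩
        rcases mem_blocks0.mp hB with ⟨t, j, rfl⟩
        rw [mem_some] at haB hbB
        have hbB' : some (a - t + d) ∈ Bblk j := by
          have h : a - t + d = b - t := by rw [hd]; ring
          rwa [h]
        -- now `(j, a - t)` and `(i, x)` are both hits for difference `d`
        by_cases hi : i = 4
        · subst hi
          by_cases hj : j = 4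
          · subst hj
            rw [blk4_canon haB, hW]
            have hx4 : some (a - (a - x)) ∈ Bblk 4 := by
              have h : a - (a - x) = x := by ring
              rwa [h]
            rw [blk4_canon hx4]
          · exfalso
            have hne : some (a - t) ≠ some (a - t + d) := by
              simp only [ne_eq, Option.some.injEq, left_eq_add]
              exact hd0
            have hp := Kmem j hj _ haB _ hbB' (by simp) (by simp) hne
            have hd25 := K25 _ he _ hxd (by simp) (by simp)
              (by simp only [ne_eq, Option.some.injEq, left_eq_add]; exact hd0)
            simp only [Option.getD_some] at hp hd25
            have hK := Kdisj _ hp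
            simp only [add_sub_cancel_left] at hK hd25
            exact hK hd25
        · by_cases hj : j = 4
          · exfalso
            subst hj
            have hp := Kmem i hi _ he _ hxd (by simp) (by simp)
              (by simp only [ne_eq, Option.some.injEq, left_eq_add]; exact hd0)
            have hd25 := K25 _ haB _ hbB' (by simp) (by simp)
              (by simp only [ne_eq, Option.some.injEq, left_eq_add]; exact hd0)
            simp only [Option.getD_some] at hp hd25
            have hK := Kdisj _ hp
            simp only [add_sub_cancel_left] at hK hd25
            exact hK hd25
          · have hp1 := Kmem j hj _ haB _ hbB' (by simp) (by simp)
              (by simp only [ne_eq, Option.some.injEq, left_eq_add]; exact hd0)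
            have hp2 := Kmem i hi _ he _ hxd (by simp) (by simp)
              (by simp only [ne_eq, Option.some.injEq, left_eq_add]; exact hd0)
            simp only [Option.getD_some] at hp1 hp2
            have heq := List.inj_on_of_nodup_map Knodup hp1 hp2
              (by simp only [add_sub_cancel_left])
            have hji : j = i := congrArg Prod.fst heq
            have hxx : a - t = x := congrArg (fun p => p.2.1) heq
            have ht : t = a - x := by rw [← hxx]; ring
            rw [hji, ht, hW]
    intro p q hpq
    cases p with
    | some a => exact main a q (Ne.symm hpq)
    | none =>
      cases q with
      | none => exact absurd rfl hpq
      | some b =>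
        obtain ⟨B, ⟨h1, h2, h3⟩, hu⟩ := main b none (by simp)
        exact ⟨B, ⟨h1, h3, h2⟩, fun C ⟨c1, c2, c3⟩ => hu C ⟨c1, c3, c2⟩⟩
  · intro t B hB
    rcases mem_blocks0.mp hB with ⟨s, i, rfl⟩
    exact mem_blocks0.mpr ⟨s + t, i, by rw [image_image]⟩
  · intro t; rfl
  · intro t ht x hx
    cases x with
    | none => rfl
    | some a =>
      exfalso
      apply ht
      simp only [tr125, Option.map_some] at hx
      have := Option.some.inj hx
      linear_combination this
end

section
/- Let G = DihedralGroup 63 (the dihedral group D126 of order 126). There is no family ℬ of 6-element finite subsets of G that is invariant under left translation and such that every pair of distinct elements of G is contained in exactly one member of ℬ. In other words, no Steiner system S(2,6,126) (unital of order 5) admits a point-transitive and effective action of D126. -/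
open DihedralGroup Finset

abbrev G126 := DihedralGroup 63

lemma zmod_aux : ∀ d : ZMod 63, d ≠ 0 → d + d + d ≠ 0 →
    (0:ZMod 63) ≠ d ∧ (0:ZMod 63) ≠ d+d ∧ (0:ZMod 63) ≠ d+d+d ∧ (0:ZMod 63) ≠ d+d+d+d ∧
    d ≠ d+d ∧ d ≠ d+d+d ∧ d ≠ d+d+d+d ∧ d+d ≠ d+d+d ∧ d+d ≠ d+d+d+d ∧ d+d+d ≠ d+d+d+d := by
  decide

lemma zmod_aux2 : ∀ d : ZMod 63, d ≠ 0 → d + d + d = 0 → d = 21 ∨ d = 42 := by decide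

/-- No Steiner system `S(2,6,126)` admits a point-transitive and effective action of
the dihedral group `D126 = DihedralGroup 63` of order 126: there is no family of
6-element blocks on `D126`, invariant under left translation, in which every pair of
distinct points lies in exactly one block. -/
theorem no_unital_D126 :
    ¬ ∃ ℬ : Set (Finset (DihedralGroup 63)),
        (∀ B ∈ ℬ, B.card = 6) ∧
        (∀ g : DihedralGroup 63, ∀ B ∈ ℬ, B.image (fun x => g * x) ∈ ℬ) ∧
        (∀ p q : DihedralGroup 63, p ≠ q → ∃! B, B ∈ ℬ ∧ p ∈ B ∧ q ∈ B) := by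
  classical
  rintro ⟨ℬ, h6, htrans, hpair⟩
  -- uniqueness helper
  have huniq : ∀ p q : G126, p ≠ q → ∀ B B', B ∈ ℬ → p ∈ B → q ∈ B →
      B' ∈ ℬ → p ∈ B' → q ∈ B' → B = B' := by
    intro p q hpq B B' hB hpB hqB hB' hpB' hqB'
    exact ((hpair p q hpq).unique ⟨hB, hpB, hqB⟩ ⟨hB', hpB', hqB'⟩)
  have hne : ∀ i : ZMod 63, (1 : G126) ≠ sr i := by
    intro i h
    rw [one_def] at h
    cases h
  -- f i : the block through 1 and sr i
  choose f hfB hf1 hfsr using fun i : ZMod 63 => (hpair 1 (sr i) (hne i)).exists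
  -- composition of stabilizations
  have hmul : ∀ (g h : G126) (B : Finset G126), B.image (fun x => g * x) = B →
      B.image (fun x => h * x) = B → B.image (fun x => (g * h) * x) = B := by
    intro g h B hg hh
    calc B.image (fun x => (g * h) * x)
        = (B.image (fun x => h * x)).image (fun x => g * x) := by
          rw [Finset.image_image]; congr 1; funext x; simp [mul_assoc]
      _ = B := by rw [hh, hg]
  have hmem : ∀ (g : G126) (B : Finset G126), (1:G126) ∈ B →
      B.image (fun x => g * x) = B → g ∈ B := by
    intro g B h1 hg
    have : g * 1 ∈ B.image (fun x => g * x) := Finset.mem_image_of_mem _ h1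
    rwa [mul_one, hg] at this
  -- each sr i stabilizes f i
  have hstab : ∀ i : ZMod 63, ∀ B : Finset G126, B ∈ ℬ → (1:G126) ∈ B → sr i ∈ B →
      B.image (fun x => sr i * x) = B := by
    intro i B hB h1 hs
    have himg : B.image (fun x => sr i * x) ∈ ℬ := htrans (sr i) B hB
    have h1' : (1:G126) ∈ B.image (fun x => sr i * x) := by
      refine Finset.mem_image.mpr ⟨sr i, hs, ?_⟩
      rw [sr_mul_sr, sub_self, one_def]
    have hs' : sr i ∈ B.image (fun x => sr i * x) := by
      refine Finset.mem_image.mpr ⟨1, h1, mul_one _⟩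
    exact huniq 1 (sr i) (hne i) _ B himg h1' hs' hB h1 hs
  -- key lemma: coincident fibers force r 21 in the block
  have key : ∀ i j : ZMod 63, i ≠ j → f i = f j → r 21 ∈ f i := by
    intro i j hij hfij
    set B := f i with hBdef
    have hB : B ∈ ℬ := hfB i
    have h1 : (1:G126) ∈ B := hf1 i
    have hsi : sr i ∈ B := hfsr i
    have hsj : sr j ∈ B := by rw [hfij]; exact hfsr j
    have sti := hstab i B hB h1 hsi
    have stj := hstab j B hB h1 hsj
    set d : ZMod 63 := j - i with hd
    have hd0 : d ≠ 0 := sub_ne_zero.mpr (Ne.symm hij)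
    have std : B.image (fun x => r d * x) = B := by
      have := hmul (sr i) (sr j) B sti stj
      rw [sr_mul_sr] at this; exact this
    have std2 := hmul _ _ B std std
    rw [r_mul_r] at std2
    have std3 := hmul _ _ B std2 std
    rw [r_mul_r] at std3
    have std4 := hmul _ _ B std3 std
    rw [r_mul_r] at std4
    have hrd : r d ∈ B := hmem _ B h1 std
    have hrd2 : r (d+d) ∈ B := hmem _ B h1 std2
    have hrd3 : r (d+d+d) ∈ B := hmem _ B h1 std3
    have hrd4 : r (d+d+d+d) ∈ B := hmem _ B h1 std4
    by_cases h3 : d + d + d = 0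
    · rcases zmod_aux2 d hd0 h3 with h | h
      · rwa [← h]
      · have : d + d = 21 := by rw [h]; decide
        rwa [← this]
    · exfalso
      obtain ⟨e1, e2, e3, e4, e5, e6, e7, e8, e9, e10⟩ := zmod_aux d hd0 h3
      have hsub : ({r 0, r d, r (d+d), r (d+d+d), r (d+d+d+d), sr i, sr j} : Finset G126) ⊆ B := by
        intro x hx
        simp only [Finset.mem_insert, Finset.mem_singleton] at hx
        rcases hx with h|h|h|h|h|h|h <;> subst h
        · rwa [← one_def]
        all_goals assumption
      have hcard : ({r 0, r d, r (d+d), r (d+d+d), r (d+d+d+d), sr i, sr j} : Finset G126).card = 7 := by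
        rw [Finset.card_insert_of_notMem (by simp [e1, e2, e3, e4, -r_zero]),
            Finset.card_insert_of_notMem (by simp [e5, e6, e7]),
            Finset.card_insert_of_notMem (by simp [e8, e9]),
            Finset.card_insert_of_notMem (by simp [e10]),
            Finset.card_insert_of_notMem (by simp),
            Finset.card_insert_of_notMem (by simp [hij]),
            Finset.card_singleton]
      have := Finset.card_le_card hsub
      rw [hcard, h6 B hB] at this
      omega
  -- the special block through 1 and r 21
  have hne21 : (1:G126) ≠ r 21 := by rw [one_def]; intro h; injection h with h'; revert h'; decide
  obtain ⟨Bs, ⟨hBs, h1Bs, h21Bs⟩, -⟩ := hpair 1 (r 21) hne21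
  have hfib : ∀ i j : ZMod 63, i ≠ j → f i = f j → f i = Bs := by
    intro i j hij hfij
    exact huniq 1 (r 21) hne21 (f i) Bs (hfB i) (hf1 i) (key i j hij hfij) hBs h1Bs h21Bs
  -- counting
  set A : Finset (ZMod 63) := Finset.univ.filter (fun i => f i ≠ Bs) with hA
  have hAinj : Set.InjOn f A := by
    intro i hi j hj hfij
    by_contra hij
    exact (Finset.mem_filter.mp hi).2 (hfib i j hij hfij)
  have hA6 : (Finset.univ.filter (fun i : ZMod 63 => f i = Bs)).card ≤ 6 := by
    have hstep : (Finset.univ.filter (fun i : ZMod 63 => f i = Bs)).card ≤ Bs.card := by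
      apply Finset.card_le_card_of_injOn (fun i => (sr i : G126))
      · intro i hi
        have : f i = Bs := (Finset.mem_filter.mp hi).2
        rw [← this]; exact hfsr i
      · intro a _ b _ h; injection h
    rw [h6 Bs hBs] at hstep
    exact hstep
  have hcardZ : (Finset.univ : Finset (ZMod 63)).card = 63 := by decide
  have hAcard : 57 ≤ A.card := by
    have := Finset.card_filter_add_card_filter_not
      (s := (Finset.univ : Finset (ZMod 63))) (p := fun i => f i = Bs)
    rw [hcardZ] at this
    have hAe : A = Finset.univ.filter (fun i => ¬ (f i = Bs)) := rfl
    rw [hAe]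
    omega
  set T : Finset (Finset G126) := insert Bs (A.image f) with hT
  have hTmem : ∀ B ∈ T, B ∈ ℬ ∧ (1:G126) ∈ B := by
    intro B hB
    rcases Finset.mem_insert.mp hB with h | h
    · subst h; exact ⟨hBs, h1Bs⟩
    · obtain ⟨i, _, rfl⟩ := Finset.mem_image.mp h
      exact ⟨hfB i, hf1 i⟩
  have hTcard : 58 ≤ T.card := by
    have hnm : Bs ∉ A.image f := by
      intro h
      obtain ⟨i, hi, hfi⟩ := Finset.mem_image.mp h
      exact (Finset.mem_filter.mp hi).2 hfi
    rw [hT, Finset.card_insert_of_notMem hnm, Finset.card_image_of_injOn hAinj]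
    omega
  -- blocks through 1 are pairwise disjoint away from 1
  have hdisj : ∀ B ∈ T, ∀ B' ∈ T, B ≠ B' → Disjoint (B.erase 1) (B'.erase 1) := by
    intro B hB B' hB' hBB'
    obtain ⟨hBℬ, h1B⟩ := hTmem B hB
    obtain ⟨hB'ℬ, h1B'⟩ := hTmem B' hB'
    rw [Finset.disjoint_left]
    intro x hx hx'
    have hx1 : x ≠ 1 := Finset.ne_of_mem_erase hx
    exact hBB' (huniq 1 x (Ne.symm hx1) B B' hBℬ h1B (Finset.mem_of_mem_erase hx)
      hB'ℬ h1B' (Finset.mem_of_mem_erase hx'))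
  have hsum : (T.biUnion (fun B => B.erase 1)).card = 5 * T.card := by
    rw [Finset.card_biUnion hdisj]
    rw [Finset.sum_congr rfl (fun B hB => by
      rw [Finset.card_erase_of_mem (hTmem B hB).2, h6 B (hTmem B hB).1])]
    simp [mul_comm]
  have hle : (T.biUnion (fun B => B.erase 1)).card ≤ 126 := by
    have : (T.biUnion (fun B => B.erase 1)).card ≤ Fintype.card G126 :=
      Finset.card_le_card (Finset.subset_univ _)
    rwa [DihedralGroup.card] at this
  omega
end
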